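/- Let L > 0, T_s > 0 and m ≥ 1 a natural number. For any μ : Fin m → ℝ with μ_i > 0 for all i and ∑_i μ_i = T_s, one has ∑_i μ_i·(e^{L/μ_i} − 1) ≥ T_s·(e^{m·L/T_s} − 1), with equality if and only if μ_i = T_s/m for all i. -/

import Mathlib

open Real

lemma tangent_key (L c x : ℝ) (hL : 0 < L) (hc : 0 < c) (hx : 0 < x) :
    Real.exp (L/c) * (x + x * (L/x - L/c)) ≤ x * Real.exp (L/x) ∧
      (x * Real.exp (L/x) = Real.exp (L/c) * (x + x * (L/x - L/c)) ↔ x = c) := by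
  set t : ℝ := L/x - L/c with ht
  have hrw : x * Real.exp (L/x) = Real.exp (L/c) * (x * Real.exp t) := by
    have hadd : L/c + t = L/x := by rw [ht]; ring
    rw [← hadd, Real.exp_add]; ring
  have hbase : x + x * t = x * (1 + t) := by ring
  have hle : x * (1 + t) ≤ x * Real.exp t := by
    have := Real.add_one_le_exp t
    nlinarith
  have htzero : t = 0 ↔ x = c := by
    constructor
    · intro h
      have : L / x = L / c := by linarith [sub_eq_zero.mp h]
      rw [div_eq_div_iff hx.ne' hc.ne'] at this
      exact (mul_left_cancel₀ hL.ne' this).symm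
    · intro h; simp [ht, h]
  constructor
  · rw [hrw, hbase]
    exact mul_le_mul_of_nonneg_left hle (Real.exp_pos _).le
  · constructor
    · intro h
      rw [hrw] at h
      have hepos : (0:ℝ) < Real.exp (L/c) := Real.exp_pos _
      have h2 : x * Real.exp t = x + x * t := by
        have := mul_left_cancel₀ (ne_of_gt hepos) h
        linarith
      by_contra hne
      have htne : t ≠ 0 := fun h0 => hne (htzero.mp h0)
      have := Real.add_one_lt_exp htne
      nlinarith
    · intro h
      have : t = 0 := htzero.mpr h
      rw [hrw, this, Real.exp_zero]
      ring

theorem equal_time_splitting_minimizes_energy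
    (L Ts : ℝ) (hL : 0 < L) (hTs : 0 < Ts) (m : ℕ) (hm : 1 ≤ m)
    (μ : Fin m → ℝ) (hμ : ∀ i, 0 < μ i) (hsum : ∑ i, μ i = Ts) :
    (Ts * (Real.exp (m * L / Ts) - 1) ≤
        ∑ i, μ i * (Real.exp (L / μ i) - 1)) ∧
      ((∑ i, μ i * (Real.exp (L / μ i) - 1) =
          Ts * (Real.exp (m * L / Ts) - 1)) ↔ ∀ i, μ i = Ts / m) := by
  have hmpos : (0:ℝ) < (m:ℝ) := by exact_mod_cast Nat.lt_of_lt_of_le Nat.zero_lt_one hm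
  set c : ℝ := Ts / m with hcdef
  have hc : 0 < c := div_pos hTs hmpos
  have hLc : L / c = m * L / Ts := by
    rw [hcdef]; field_simp
  -- difference function
  set d : Fin m → ℝ :=
    fun i => μ i * Real.exp (L / μ i) - Real.exp (L/c) * (μ i + μ i * (L/μ i - L/c)) with hd
  have hd_nonneg : ∀ i, 0 ≤ d i := fun i => by
    have := (tangent_key L c (μ i) hL hc (hμ i)).1
    simp only [hd]; linarith
  have hd_zero : ∀ i, d i = 0 ↔ μ i = c := fun i => by
    have := (tangent_key L c (μ i) hL hc (hμ i)).2
    simp only [hd]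
    constructor
    · intro h; exact this.mp (by linarith)
    · intro h; have := this.mpr h; linarith
  -- sum of tangent parts
  have htan : ∀ i, μ i + μ i * (L/μ i - L/c) = μ i + L - (L/c) * μ i := by
    intro i
    have := (hμ i).ne'
    field_simp
    ring
  have hsumtan : ∑ i, (μ i + L - (L/c) * μ i) = Ts := by
    rw [Finset.sum_sub_distrib, Finset.sum_add_distrib, hsum, ← Finset.mul_sum, hsum]
    simp only [Finset.sum_const, Finset.card_univ, Fintype.card_fin, nsmul_eq_mul]
    rw [hcdef]
    field_simp
    ring
  have hsd : ∑ i, d i =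
      ∑ i, μ i * (Real.exp (L / μ i) - 1) - Ts * (Real.exp (m * L / Ts) - 1) := by
    simp only [hd]
    rw [Finset.sum_sub_distrib]
    have h1 : ∑ i, Real.exp (L/c) * (μ i + μ i * (L/μ i - L/c)) = Ts * Real.exp (m*L/Ts) := by
      rw [← Finset.mul_sum]
      have : ∑ i, (μ i + μ i * (L/μ i - L/c)) = Ts := by
        rw [Finset.sum_congr rfl (fun i _ => htan i)]; exact hsumtan
      rw [this, hLc, mul_comm]
    have h2 : ∑ i, μ i * (Real.exp (L/μ i) - 1) = (∑ i, μ i * Real.exp (L/μ i)) - Ts := by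
      simp only [mul_sub, mul_one, Finset.sum_sub_distrib, hsum]
    rw [h1, h2]
    ring
  have hsum_nonneg : 0 ≤ ∑ i, d i := Finset.sum_nonneg (fun i _ => hd_nonneg i)
  constructor
  · linarith [hsd ▸ hsum_nonneg]
  · constructor
    · intro h
      have hz : ∑ i, d i = 0 := by rw [hsd, h]; ring
      have := (Finset.sum_eq_zero_iff_of_nonneg (fun i _ => hd_nonneg i)).mp hz
      exact fun i => (hd_zero i).mp (this i (Finset.mem_univ i))
    · intro h
      have hz : ∑ i, d i = 0 :=
        Finset.sum_eq_zero (fun i _ => (hd_zero i).mpr (h i))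
      rw [hsd] at hz
      linarith
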